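/- Let Λ: ℝ → (0,1) be increasing and W a family of capacities, and set 𝑤̲(A) = inf_{w ∈ W} w(A). Then for every random variable X, inf_{w ∈ W} ΛVaR^{+,w}(X) = ΛVaR^{+,𝑤̲}(X), where ΛVaR^{+,w}(X) = sup{x ∈ ℝ : w(X > x) ≥ Λ(x)}. -/

import Mathlib

open Set

/-- Upper Lambda Value-at-Risk of `X` with respect to a capacity `w` and function `Λ`:
`sup {x ∈ ℝ : w(X > x) ≥ Λ(x)}`, valued in the extended reals (`sup ∅ = ⊥`). -/
noncomputable def LVaRplus {Ω : Type*} (w : Set Ω → ℝ) (Λ : ℝ → ℝ) (X : Ω → ℝ) : EReal :=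
  sSup ((fun x : ℝ => (x : EReal)) '' {x : ℝ | Λ x ≤ w {ω | x < X ω}})

/-- For `Λ : ℝ → (0,1)` increasing and a nonempty family `W` of capacities,
with `w̲ = inf_{w ∈ W} w`, we have `inf_{w ∈ W} ΛVaR^{+,w}(X) = ΛVaR^{+,w̲}(X)`. -/
theorem stmt_4 {Ω : Type*} (W : Set (Set Ω → ℝ)) (hW : W.Nonempty)
    (hcap : ∀ w ∈ W, (∀ A B : Set Ω, A ⊆ B → w A ≤ w B) ∧
      w (∅ : Set Ω) = 0 ∧ w (univ : Set Ω) = 1)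
    (Λ : ℝ → ℝ) (hΛ : ∀ x, Λ x ∈ Ioo (0 : ℝ) 1) (hΛ_mono : Monotone Λ)
    (X : Ω → ℝ) :
    (⨅ w : W, LVaRplus (w : Set Ω → ℝ) Λ X) =
      LVaRplus (fun A => ⨅ w : W, (w : Set Ω → ℝ) A) Λ X := by
  haveI : Nonempty W := hW.to_subtype
  have hbdd : ∀ A : Set Ω, BddBelow (range fun w : W => (w : Set Ω → ℝ) A) := by
    intro A
    refine ⟨0, ?_⟩
    rintro _ ⟨w, rfl⟩
    have h := hcap w w.2
    have := h.1 ∅ A (empty_subset A)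
    linarith [h.2.1]
  apply le_antisymm
  · by_contra h
    push_neg at h
    obtain ⟨x, hx1, hx2⟩ := EReal.exists_between_coe_real h
    have hx : ∀ w : W, Λ x ≤ (w : Set Ω → ℝ) {ω | x < X ω} := by
      intro w
      have hlt : (x : EReal) < LVaRplus (w : Set Ω → ℝ) Λ X :=
        lt_of_lt_of_le hx2 (iInf_le _ w)
      rw [LVaRplus, lt_sSup_iff] at hlt
      obtain ⟨b, hb, hxb⟩ := hlt
      obtain ⟨y, hy, rfl⟩ := hb
      have hxy : x < y := by simpa using hxb
      calc Λ x ≤ Λ y := hΛ_mono hxy.le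
        _ ≤ (w : Set Ω → ℝ) {ω | y < X ω} := hy
        _ ≤ (w : Set Ω → ℝ) {ω | x < X ω} :=
          (hcap w w.2).1 _ _ (fun ω hω => lt_trans hxy hω)
    have hmem : x ∈ {x : ℝ | Λ x ≤ (fun A => ⨅ w : W, (w : Set Ω → ℝ) A) {ω | x < X ω}} :=
      le_ciInf hx
    have hle : (x : EReal) ≤ LVaRplus (fun A => ⨅ w : W, (w : Set Ω → ℝ) A) Λ X :=
      le_sSup (mem_image_of_mem _ hmem)
    exact absurd (lt_of_le_of_lt hle hx1) (lt_irrefl _)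
  · refine le_iInf fun w => ?_
    refine sSup_le_sSup (image_mono ?_)
    intro x hx
    exact le_trans hx (ciInf_le (hbdd _) w)
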